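/- Let s ≥ 2 and let C ⊆ Z_{2^s}^n be a subgroup such that Φ(C) is a binary Hadamard code of length N = 2^{s−1}·n. Then for every i ∈ {1,…,s}, the binary code Φ(C_i) is a binary Hadamard code of length 2^{s−i+1}·N. -/

import Mathlib

/-- The `i`-th digit of the binary expansion of `u : ZMod (2^s)`. -/
def gdigit (s : ℕ) (u : ZMod (2^s)) (i : ℕ) : ZMod 2 :=
  if (ZMod.val u).testBit i then 1 else 0

/-- Carlet's generalized Gray map `φ : ZMod (2^s) → (Z_2^{s-1} → Z_2)`:
the coordinate indexed by `y ∈ Z_2^{s-1}` is `u_{s-1} + ∑ u_i y_i`. -/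
def gray (s : ℕ) (u : ZMod (2^s)) : (Fin (s - 1) → ZMod 2) → ZMod 2 :=
  fun y => gdigit s u (s - 1) + ∑ i : Fin (s - 1), gdigit s u (i : ℕ) * y i

/-- The coordinatewise extension `Φ` of the Gray map, on vectors indexed by `ι`. -/
def PhiMap {ι : Type} (s : ℕ) (u : ι → ZMod (2^s)) :
    ι × (Fin (s - 1) → ZMod 2) → ZMod 2 :=
  fun p => gray s (u p.1) p.2

/-- The `m`-fold replication `(c,c,…,c)` of a vector `c` of length `n`. -/
def replicate {α : Type} (m n : ℕ) (c : Fin n → α) : Fin (m * n) → α :=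
  fun k => c ⟨(k : ℕ) % n, Nat.mod_lt _ (Nat.pos_of_ne_zero (fun h => by
    have hk := k.isLt
    simp [h] at hk))⟩

/-- The vector `w_i` made of `2^{s-i+1}` consecutive constant blocks of length `n`,
the `j`-th block having all entries equal to `j·2^{i-1}`. -/
def wRep (s n i : ℕ) : Fin (2 ^ (s - i + 1) * n) → ZMod (2^s) :=
  fun k => (((k : ℕ) / n : ℕ) : ZMod (2^s)) * 2 ^ (i - 1)

/-- The code `C_i = {(c,…,c) + λ·w_i : c ∈ C, λ ∈ Z_{2^s}}`. -/
def Ci (s n : ℕ) (C : Set (Fin n → ZMod (2^s))) (i : ℕ) :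
    Set (Fin (2 ^ (s - i + 1) * n) → ZMod (2^s)) :=
  {x | ∃ c ∈ C, ∃ lam : ZMod (2^s), x = replicate (2 ^ (s - i + 1)) n c + lam • wRep s n i}

/-- A binary Hadamard code of length `N`: length `N`, `2N` codewords,
and minimum Hamming distance `N/2`. -/
def IsHadamardCode {ι : Type} [Fintype ι] (C : Set (ι → ZMod 2)) (N : ℕ) : Prop :=
  Fintype.card ι = N ∧ Nat.card C = 2 * N ∧
  IsLeast {d | ∃ x ∈ C, ∃ y ∈ C, x ≠ y ∧ hammingDist x y = d} (N / 2)

namespace CiHad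

instance iNZ (s : ℕ) : NeZero (2^s) := ⟨(pow_pos (by norm_num : (0:ℕ) < 2) s).ne'⟩

/-- `T s = 2^{s-1}` in `ZMod (2^s)`. -/
def T (s : ℕ) : ZMod (2^s) := ((2^(s-1) : ℕ) : ZMod (2^s))

lemma T_val {s : ℕ} (hs : 1 ≤ s) : (T s).val = 2^(s-1) := by
  rw [T, ZMod.val_natCast, Nat.mod_eq_of_lt]
  exact Nat.pow_lt_pow_right one_lt_two (by omega)

lemma T_ne_zero {s : ℕ} (hs : 1 ≤ s) : T s ≠ 0 := by
  intro h
  have h1 := T_val hs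
  rw [h, ZMod.val_zero] at h1
  exact (pow_pos (by norm_num : (0:ℕ) < 2) (s-1)).ne h1

lemma T_add_T {s : ℕ} (hs : 1 ≤ s) : T s + T s = 0 := by
  rw [T, ← Nat.cast_add]
  have : 2^(s-1) + 2^(s-1) = 2^s := by
    rw [← two_mul, ← pow_succ']
    congr 1
    omega
  rw [this, ZMod.natCast_self]

lemma cast_val_eq {s : ℕ} (a : ZMod (2^s)) : ((a.val : ℕ) : ZMod (2^s)) = a :=
  ZMod.natCast_rightInverse a

lemma gdigit_eq_iff {s : ℕ} (a b : ZMod (2^s)) (j : ℕ) :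
    gdigit s a j = gdigit s b j ↔ a.val.testBit j = b.val.testBit j := by
  unfold gdigit
  rcases ha : a.val.testBit j <;> rcases hb : b.val.testBit j <;> simp [ha, hb]

lemma eq_of_digits {s : ℕ} (a b : ZMod (2^s))
    (h : ∀ j, j < s → a.val.testBit j = b.val.testBit j) : a = b := by
  have hv : a.val = b.val := by
    apply Nat.eq_of_testBit_eq
    intro j
    by_cases hj : j < s
    · exact h j hj
    · rw [Nat.testBit_lt_two_pow, Nat.testBit_lt_two_pow]
      · exact lt_of_lt_of_le b.val_lt (Nat.pow_le_pow_right (by norm_num) (by omega))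
      · exact lt_of_lt_of_le a.val_lt (Nat.pow_le_pow_right (by norm_num) (by omega))
  rw [← cast_val_eq a, ← cast_val_eq b, hv]

lemma low_iff {s : ℕ} (a b : ZMod (2^s)) :
    (∀ j, j < s - 1 → a.val.testBit j = b.val.testBit j) ↔
      a.val % 2^(s-1) = b.val % 2^(s-1) := by
  constructor
  · intro h
    apply Nat.eq_of_testBit_eq
    intro j
    rw [Nat.testBit_mod_two_pow, Nat.testBit_mod_two_pow]
    by_cases hj : j < s - 1
    · simp [hj, h j hj]
    · simp [hj]
  · intro h j hj
    have h1 := congrArg (fun x => x.testBit j) h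
    simpa [Nat.testBit_mod_two_pow, hj] using h1

lemma val_add_T_mod {s : ℕ} (hs : 1 ≤ s) (b : ZMod (2^s)) :
    (b + T s).val % 2^(s-1) = b.val % 2^(s-1) := by
  rw [ZMod.val_add, T_val hs, Nat.mod_mod_of_dvd _ (pow_dvd_pow 2 (by omega)),
    Nat.add_mod_right]

lemma sub_eq_of_low {s : ℕ} (hs : 1 ≤ s) (a b : ZMod (2^s))
    (h : a.val % 2^(s-1) = b.val % 2^(s-1)) : a - b = 0 ∨ a - b = T s := by
  have hsplit : ∀ x : ZMod (2^s),
      x = T s * ((x.val / 2^(s-1) : ℕ) : ZMod (2^s)) + ((x.val % 2^(s-1) : ℕ) : ZMod (2^s)) := by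
    intro x
    conv_lhs => rw [← cast_val_eq x, ← Nat.div_add_mod x.val (2^(s-1))]
    rw [T]
    push_cast
    ring
  have hqa : a.val / 2^(s-1) < 2 := by
    apply Nat.div_lt_of_lt_mul
    have := a.val_lt
    have h2 : 2 * 2^(s-1) = 2^s := by rw [← pow_succ']; congr 1; omega
    omega
  have hqb : b.val / 2^(s-1) < 2 := by
    apply Nat.div_lt_of_lt_mul
    have := b.val_lt
    have h2 : 2 * 2^(s-1) = 2^s := by rw [← pow_succ']; congr 1; omega
    omega
  have key : a - b = T s * ((a.val / 2^(s-1) : ℕ) : ZMod (2^s))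
      - T s * ((b.val / 2^(s-1) : ℕ) : ZMod (2^s)) := by
    conv_lhs => rw [hsplit a, hsplit b]
    rw [h]
    ring
  set qa := a.val / 2^(s-1) with hqa'
  set qb := b.val / 2^(s-1) with hqb'
  have hTT := T_add_T (s := s) hs
  interval_cases qa <;> interval_cases qb
  · left; rw [key]; push_cast; ring
  · right; rw [key]; push_cast; linear_combination -hTT
  · right; rw [key]; push_cast; ring
  · left; rw [key]; push_cast; ring


/-- Homogeneous weight. -/
def hwt (s : ℕ) (e : ZMod (2^s)) : ℕ :=
  if e = 0 then 0 else if e = T s then 2^(s-1) else 2^(s-2)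

lemma zmod2_cases : ∀ t : ZMod 2, t = 0 ∨ t = 1 := by decide

lemma zmod2_ne_iff : ∀ x y : ZMod 2, x ≠ y ↔ x - y = 1 := by decide

lemma zmod2_add_one_one : ∀ t : ZMod 2, (t + 1 = 1 ↔ ¬ t = 1) := by decide

lemma zmod2_add_one_one' : ∀ t : ZMod 2, t + 1 + 1 = t := by decide

lemma gray_update {s : ℕ} (u : ZMod (2^s)) (y : Fin (s-1) → ZMod 2) (j : Fin (s-1)) :
    gray s u (Function.update y j (y j + 1)) = gray s u y + gdigit s u j := by
  unfold gray
  have h1 : (fun i : Fin (s-1) => gdigit s u i * Function.update y j (y j + 1) i)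
      = Function.update (fun i : Fin (s-1) => gdigit s u (i : ℕ) * y i) j (gdigit s u (j : ℕ) * (y j + 1)) := by
    funext i
    by_cases h : i = j
    · subst h; simp
    · simp [Function.update_of_ne h]
  rw [h1, Finset.sum_update_of_mem (Finset.mem_univ j)]
  have h2 : ∑ i : Fin (s-1), gdigit s u (i : ℕ) * y i
      = gdigit s u (j : ℕ) * y j + ∑ i ∈ Finset.univ \ {j}, gdigit s u (i : ℕ) * y i := by
    rw [Finset.sum_eq_add_sum_sdiff_singleton_of_mem (Finset.mem_univ j)]
  rw [h2]
  ring

lemma gray_sub_const {s : ℕ} (a b : ZMod (2^s))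
    (hlow : ∀ j : Fin (s-1), gdigit s a (j : ℕ) = gdigit s b (j : ℕ))
    (y : Fin (s-1) → ZMod 2) :
    gray s a y - gray s b y = gdigit s a (s-1) - gdigit s b (s-1) := by
  unfold gray
  have h1 : ∑ i : Fin (s-1), gdigit s a (i : ℕ) * y i
      = ∑ i : Fin (s-1), gdigit s b (i : ℕ) * y i :=
    Finset.sum_congr rfl fun i _ => by rw [hlow i]
  rw [h1]
  ring

lemma card_fun2 (m : ℕ) : Fintype.card (Fin m → ZMod 2) = 2^m := by
  simp [Fintype.card_fun]

lemma grayDist {s : ℕ} (hs : 2 ≤ s) (a b : ZMod (2^s)) :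
    hammingDist (gray s a) (gray s b) = hwt s (a - b) := by
  classical
  by_cases hlow : ∀ j : Fin (s-1), gdigit s a (j : ℕ) = gdigit s b (j : ℕ)
  · have hmod : a.val % 2^(s-1) = b.val % 2^(s-1) := by
      rw [← low_iff]
      intro j hj
      have := hlow ⟨j, hj⟩
      rwa [gdigit_eq_iff] at this
    by_cases hab : a = b
    · subst hab
      simp [hammingDist_self, hwt]
    · have hd : a - b = T s := by
        rcases sub_eq_of_low (by omega) a b hmod with h | h
        · exact absurd (sub_eq_zero.mp h) hab
        · exact h
      rw [hd]
      have hw : hwt s (T s) = 2^(s-1) := by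
        rw [hwt, if_neg (T_ne_zero (by omega)), if_pos rfl]
      rw [hw]
      have hne : ∀ y, gray s a y ≠ gray s b y := by
        intro y heq
        apply hab
        have hc := gray_sub_const a b hlow y
        rw [heq, sub_self] at hc
        have htop : gdigit s a (s-1) = gdigit s b (s-1) := by
          have := hc.symm
          rwa [sub_eq_zero] at this
        apply eq_of_digits
        intro k hk
        rcases Nat.lt_or_ge k (s-1) with hk1 | hk1
        · have := hlow ⟨k, hk1⟩
          rwa [gdigit_eq_iff] at this
        · have hk2 : k = s - 1 := by omega
          subst hk2
          rwa [gdigit_eq_iff] at htop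
      have hdd : hammingDist (gray s a) (gray s b)
          = (Finset.univ.filter fun y => gray s a y ≠ gray s b y).card := rfl
      rw [hdd, Finset.filter_true_of_mem (fun y _ => hne y), Finset.card_univ, card_fun2]
  · push_neg at hlow
    obtain ⟨j, hj⟩ := hlow
    -- the difference value
    have hd1 : a - b ≠ 0 := by
      intro h
      exact hj (by rw [sub_eq_zero.mp h])
    have hd2 : a - b ≠ T s := by
      intro h
      have hab : a = b + T s := by linear_combination h
      apply hj
      rw [gdigit_eq_iff]
      have hmod : a.val % 2^(s-1) = b.val % 2^(s-1) := by
        rw [hab, val_add_T_mod (by omega)]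
      exact (low_iff a b).mpr hmod (j : ℕ) j.isLt
    have hw : hwt s (a - b) = 2^(s-2) := by
      rw [hwt, if_neg hd1, if_neg hd2]
    rw [hw]
    -- counting via involution
    set σ : (Fin (s-1) → ZMod 2) → (Fin (s-1) → ZMod 2) :=
      fun y => Function.update y j (y j + 1) with hσ
    have hσσ : ∀ y, σ (σ y) = y := by
      intro y
      rw [hσ]
      simp only [Function.update_self, Function.update_idem]
      rw [zmod2_add_one_one']
      exact Function.update_eq_self j y
    have hflip : ∀ y, gray s a (σ y) - gray s b (σ y) = (gray s a y - gray s b y) + 1 := by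
      intro y
      rw [hσ]
      simp only []
      rw [gray_update, gray_update]
      have : gdigit s a (j : ℕ) - gdigit s b (j : ℕ) = 1 := (zmod2_ne_iff _ _).mp hj
      linear_combination this
    have hPiff : ∀ y, (gray s a (σ y) ≠ gray s b (σ y)) ↔ ¬ (gray s a y ≠ gray s b y) := by
      intro y
      rw [zmod2_ne_iff, zmod2_ne_iff, hflip y]
      exact zmod2_add_one_one _
    classical
    have hcards : (Finset.univ.filter fun y => gray s a y ≠ gray s b y).card
        = (Finset.univ.filter fun y => ¬ (gray s a y ≠ gray s b y)).card := by
      apply Finset.card_bij' (fun y _ => σ y) (fun y _ => σ y)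
      · intro y hy
        rw [Finset.mem_filter] at hy ⊢
        exact ⟨Finset.mem_univ _, fun h => (hPiff y).mp h hy.2⟩
      · intro y hy
        rw [Finset.mem_filter] at hy ⊢
        exact ⟨Finset.mem_univ _, (hPiff y).mpr hy.2⟩
      · intro y _; exact hσσ y
      · intro y _; exact hσσ y
    have htot := Finset.card_filter_add_card_filter_not (s := Finset.univ)
      (fun y => gray s a y ≠ gray s b y)
    rw [Finset.card_univ, card_fun2] at htot
    have h2 : 2^(s-1) = 2^(s-2) + 2^(s-2) := by
      rw [← two_mul, ← pow_succ']
      congr 1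
      omega
    have hdd : hammingDist (gray s a) (gray s b)
        = (Finset.univ.filter fun y => gray s a y ≠ gray s b y).card := rfl
    rw [hdd]
    omega


lemma hwt_zero (s : ℕ) : hwt s 0 = 0 := by rw [hwt, if_pos rfl]

lemma hwt_eq_zero {s : ℕ} {e : ZMod (2^s)} (h : hwt s e = 0) : e = 0 := by
  by_contra he
  rw [hwt, if_neg he] at h
  split_ifs at h
  · exact absurd h (pow_pos (by norm_num : (0:ℕ) < 2) (s-1)).ne'
  · exact absurd h (pow_pos (by norm_num : (0:ℕ) < 2) (s-2)).ne'

lemma PhiDist {ι : Type} [Fintype ι] {s : ℕ} (hs : 2 ≤ s) (u v : ι → ZMod (2^s)) :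
    hammingDist (PhiMap s u) (PhiMap s v) = ∑ k, hwt s (u k - v k) := by
  classical
  have h0 : hammingDist (PhiMap s u) (PhiMap s v)
      = (Finset.univ.filter fun p : ι × (Fin (s-1) → ZMod 2)
          => PhiMap s u p ≠ PhiMap s v p).card := rfl
  rw [h0, Finset.card_filter, Fintype.sum_prod_type]
  apply Finset.sum_congr rfl
  intro k _
  rw [← grayDist hs (u k) (v k)]
  have h1 : hammingDist (gray s (u k)) (gray s (v k))
      = (Finset.univ.filter fun y => gray s (u k) y ≠ gray s (v k) y).card := rfl
  rw [h1, Finset.card_filter]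
  apply Finset.sum_congr rfl
  intro y _
  rfl

lemma Phi_inj {ι : Type} [Fintype ι] {s : ℕ} (hs : 2 ≤ s) :
    Function.Injective (PhiMap (ι := ι) s) := by
  intro u v h
  have h1 := PhiDist hs u v
  rw [h, hammingDist_self] at h1
  funext k
  have h2 : hwt s (u k - v k) = 0 := by
    have := (Finset.sum_eq_zero_iff).mp h1.symm k (Finset.mem_univ k)
    exact this
  have := hwt_eq_zero h2
  rw [← sub_eq_zero]
  exact this

lemma exists_h {s : ℕ} (hs : 1 ≤ s) (α : ZMod (2^s)) (hα : α ≠ 0) :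
    ∃ h : ℕ, (h : ZMod (2^s)) * α = T s := by
  set v := α.val with hv
  have hv0 : v ≠ 0 := by
    intro h
    exact hα ((ZMod.val_eq_zero α).mp h)
  set t := v.factorization 2 with ht'
  set m := v / 2^t with hm'
  have hfact : 2^t * m = v := Nat.ordProj_mul_ordCompl_eq_self v 2
  have hmodd : ¬ 2 ∣ m := Nat.not_dvd_ordCompl Nat.prime_two hv0
  have ht : t < s := by
    by_contra hcon
    push_neg at hcon
    have h1 : 2^s ≤ 2^t := Nat.pow_le_pow_right (by norm_num) hcon
    have h2 : 2^t ≤ v := Nat.le_of_dvd (Nat.pos_of_ne_zero hv0) (Nat.ordProj_dvd v 2)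
    have h3 := ZMod.val_lt α
    omega
  have hcop : m.Coprime (2^s) :=
    Nat.Coprime.pow_right s ((Nat.Prime.coprime_iff_not_dvd Nat.prime_two).mpr hmodd).symm
  refine ⟨2^(s-1-t) * ((m : ZMod (2^s))⁻¹).val, ?_⟩
  have hα' : α = ((2^t * m : ℕ) : ZMod (2^s)) := by rw [hfact, hv]; exact (cast_val_eq α).symm
  rw [hα', T]
  push_cast
  rw [cast_val_eq]
  have h1 : (m : ZMod (2^s))⁻¹ * m = 1 := by
    rw [mul_comm]
    exact ZMod.coe_mul_inv_eq_one m hcop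
  calc (2:ZMod (2^s))^(s-1-t) * (m : ZMod (2^s))⁻¹ * (2^t * m)
      = (2^(s-1-t) * 2^t) * ((m : ZMod (2^s))⁻¹ * m) := by ring
    _ = 2^(s-1) := by rw [h1, mul_one, ← pow_add]; congr 1; omega

lemma M_alpha_zero {s i : ℕ} (hi1 : 1 ≤ i) (his : i ≤ s) (lam : ZMod (2^s)) :
    ((2^(s-i+1) : ℕ) : ZMod (2^s)) * (lam * 2^(i-1)) = 0 := by
  push_cast
  have h1 : (2:ZMod (2^s))^(s-i+1) * 2^(i-1) = 2^s := by
    rw [← pow_add]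
    congr 1
    omega
  calc (2:ZMod (2^s))^(s-i+1) * (lam * 2^(i-1))
      = lam * ((2:ZMod (2^s))^(s-i+1) * 2^(i-1)) := by ring
    _ = lam * 2^s := by rw [h1]
    _ = 0 := by
        have : ((2^s : ℕ) : ZMod (2^s)) = 0 := ZMod.natCast_self _
        push_cast at this
        rw [this, mul_zero]

lemma key_sum {s i : ℕ} (hs : 2 ≤ s) (hi1 : 1 ≤ i) (his : i ≤ s)
    (lam e : ZMod (2^s)) (hα : lam * 2^(i-1) ≠ 0) :
    2^(s-i+1) * 2^(s-2) ≤ ∑ j : Fin (2^(s-i+1)), hwt s (e + (j : ℕ) * (lam * 2^(i-1))) := by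
  classical
  set M := 2^(s-i+1) with hM
  have hMpos : 0 < M := pow_pos (by norm_num : (0:ℕ) < 2) _
  set α := lam * 2^(i-1) with hαd
  have hmod : ∀ a b : ℕ, a % M = b % M → (a : ZMod (2^s)) * α = (b : ZMod (2^s)) * α := by
    have key : ∀ c : ℕ, (c : ZMod (2^s)) * α = ((c % M : ℕ) : ZMod (2^s)) * α := by
      intro c
      conv_lhs => rw [← Nat.div_add_mod c M]
      push_cast
      have hM0 : ((M : ℕ) : ZMod (2^s)) * α = 0 := M_alpha_zero hi1 his lam
      push_cast at hM0
      calc ((M : ZMod (2^s)) * (c / M : ℕ) + ((c % M : ℕ) : ZMod (2^s))) * α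
          = (c / M : ℕ) * ((M : ZMod (2^s)) * α) + ((c % M : ℕ) : ZMod (2^s)) * α := by
            push_cast; ring
        _ = ((c % M : ℕ) : ZMod (2^s)) * α := by rw [hM0, mul_zero, zero_add]
    intro a b hab
    rw [key a, key b, hab]
  obtain ⟨h, hh⟩ := exists_h (by omega) α hα
  set A := Finset.univ.filter (fun j : Fin M => e + (j:ℕ) * α = 0) with hA
  set B := Finset.univ.filter (fun j : Fin M => e + (j:ℕ) * α = T s) with hB
  have hAB : A.card ≤ B.card := by
    refine Finset.card_le_card_of_injOn
      (fun j => (⟨((j:ℕ) + h) % M, Nat.mod_lt _ hMpos⟩ : Fin M)) ?_ ?_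
    · intro j hj
      rw [hA, Finset.mem_coe, Finset.mem_filter] at hj
      rw [hB, Finset.mem_coe, Finset.mem_filter]
      refine ⟨Finset.mem_univ _, ?_⟩
      have h1 : ((((j:ℕ) + h) % M : ℕ) : ZMod (2^s)) * α = (((j:ℕ) + h : ℕ) : ZMod (2^s)) * α :=
        hmod _ _ (Nat.mod_mod_of_dvd _ dvd_rfl)
      show e + ((((j:ℕ) + h) % M : ℕ) : ZMod (2^s)) * α = T s
      rw [h1]
      push_cast
      rw [add_mul]
      rw [hh]
      rw [← add_assoc, hj.2, zero_add]
    · intro j1 h1 j2 h2 heq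
      simp only [Fin.mk.injEq] at heq
      have : (j1 : ℕ) % M = (j2 : ℕ) % M := by
        have e1 : ((j1:ℕ) + h) % M = ((j2:ℕ) + h) % M := heq
        have := Nat.ModEq.add_right_cancel' h (e1 : ((j1:ℕ) + h) ≡ ((j2:ℕ) + h) [MOD M])
        exact this
      have := Nat.mod_eq_of_lt j1.isLt ▸ Nat.mod_eq_of_lt j2.isLt ▸ this
      exact Fin.ext (by omega)
  have hstep : ∀ j : Fin M, hwt s (e + (j:ℕ)*α) + (if e + (j:ℕ)*α = 0 then 2^(s-2) else 0)
      = 2^(s-2) + (if e + (j:ℕ)*α = T s then 2^(s-2) else 0) := by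
    intro j
    by_cases h0 : e + (j:ℕ)*α = 0
    · have hT : e + (j:ℕ)*α ≠ T s := by
        rw [h0]; exact fun hc => T_ne_zero (s := s) (by omega) hc.symm
      rw [hwt, if_pos h0, if_pos h0, if_neg hT]
      omega
    · by_cases hT : e + (j:ℕ)*α = T s
      · rw [hwt, if_neg h0, if_pos hT, if_neg h0, if_pos hT]
        have h2 : 2^(s-1) = 2^(s-2) + 2^(s-2) := by
          rw [← two_mul, ← pow_succ']; congr 1; omega
        omega
      · rw [hwt, if_neg h0, if_neg hT, if_neg h0, if_neg hT]
  have hsum : (∑ j : Fin M, hwt s (e + (j:ℕ)*α)) + 2^(s-2) * A.card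
      = M * 2^(s-2) + 2^(s-2) * B.card := by
    have h1 : ∑ j : Fin M, (if e + (j:ℕ)*α = 0 then 2^(s-2) else 0) = 2^(s-2) * A.card := by
      rw [hA, ← Finset.sum_filter, Finset.sum_const, smul_eq_mul, mul_comm]
    have h2 : ∑ j : Fin M, (if e + (j:ℕ)*α = T s then 2^(s-2) else 0) = 2^(s-2) * B.card := by
      rw [hB, ← Finset.sum_filter, Finset.sum_const, smul_eq_mul, mul_comm]
    calc (∑ j : Fin M, hwt s (e + (j:ℕ)*α)) + 2^(s-2) * A.card
        = ∑ j : Fin M, (hwt s (e + (j:ℕ)*α) + if e + (j:ℕ)*α = 0 then 2^(s-2) else 0) := by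
          rw [Finset.sum_add_distrib, h1]
      _ = ∑ j : Fin M, (2^(s-2) + if e + (j:ℕ)*α = T s then 2^(s-2) else 0) := by
          exact Finset.sum_congr rfl fun j _ => hstep j
      _ = M * 2^(s-2) + 2^(s-2) * B.card := by
          rw [Finset.sum_add_distrib, h2, Finset.sum_const, Finset.card_univ, Fintype.card_fin,
            smul_eq_mul]
  have hmul : 2^(s-2) * A.card ≤ 2^(s-2) * B.card := Nat.mul_le_mul_left _ hAB
  omega


lemma replicate_val {α : Type} {m n : ℕ} (c : Fin n → α) (k : Fin (m * n)) (r : Fin n)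
    (h : (k : ℕ) % n = (r : ℕ)) : replicate m n c k = c r := by
  unfold replicate
  congr 1
  exact Fin.ext h

lemma wRep_val {s n i : ℕ} (k : Fin (2^(s-i+1)*n)) (j : ℕ) (h : (k:ℕ)/n = j) :
    wRep s n i k = (j : ZMod (2^s)) * 2^(i-1) := by
  unfold wRep
  rw [h]

lemma sum_hwt_elem {s n i : ℕ} (hn : 0 < n) (c : Fin n → ZMod (2^s)) (lam : ZMod (2^s)) :
    ∑ k : Fin (2^(s-i+1) * n), hwt s ((replicate (2^(s-i+1)) n c + lam • wRep s n i) k)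
      = ∑ j : Fin (2^(s-i+1)), ∑ r : Fin n, hwt s (c r + (j:ℕ) * (lam * 2^(i-1))) := by
  have haux : ∀ p : Fin (2^(s-i+1)) × Fin n,
      hwt s (c p.2 + ((p.1 : ℕ) : ZMod (2^s)) * (lam * 2^(i-1)))
        = hwt s ((replicate (2^(s-i+1)) n c + lam • wRep s n i) (finProdFinEquiv p)) := by
    rintro ⟨j, r⟩
    have hk : ((finProdFinEquiv (j, r) : Fin (2^(s-i+1)*n)) : ℕ) = (r : ℕ) + n * (j : ℕ) :=
      finProdFinEquiv_apply_val _
    have hmod : ((finProdFinEquiv (j, r) : Fin (2^(s-i+1)*n)) : ℕ) % n = (r : ℕ) := by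
      rw [hk, Nat.add_mul_mod_self_left, Nat.mod_eq_of_lt r.isLt]
    have hdiv : ((finProdFinEquiv (j, r) : Fin (2^(s-i+1)*n)) : ℕ) / n = (j : ℕ) := by
      rw [hk, Nat.add_mul_div_left _ _ hn, Nat.div_eq_of_lt r.isLt, zero_add]
    rw [Pi.add_apply, Pi.smul_apply, smul_eq_mul,
      replicate_val c _ r hmod, wRep_val _ _ hdiv]
    congr 1
    ring
  calc ∑ k : Fin (2^(s-i+1) * n), hwt s ((replicate (2^(s-i+1)) n c + lam • wRep s n i) k)
      = ∑ p : Fin (2^(s-i+1)) × Fin n,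
          hwt s (c p.2 + ((p.1 : ℕ) : ZMod (2^s)) * (lam * 2^(i-1))) :=
        (Fintype.sum_equiv finProdFinEquiv _ _ haux).symm
    _ = ∑ j : Fin (2^(s-i+1)), ∑ r : Fin n,
          hwt s (c r + (j:ℕ) * (lam * 2^(i-1))) := Fintype.sum_prod_type _

lemma rep_zero {s n : ℕ} (m : ℕ) : replicate m n (0 : Fin n → ZMod (2^s)) = 0 := by
  funext k
  simp [replicate]

lemma Ci_zero_mem {s n i : ℕ} (C : AddSubgroup (Fin n → ZMod (2^s))) :
    (0 : Fin (2^(s-i+1)*n) → ZMod (2^s)) ∈ Ci s n (C : Set _) i := by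
  refine ⟨0, C.zero_mem, 0, ?_⟩
  rw [rep_zero, zero_smul, add_zero]

lemma rep_sub {s n : ℕ} (m : ℕ) (c c' : Fin n → ZMod (2^s)) :
    replicate m n (c - c') = replicate m n c - replicate m n c' := by
  funext k
  simp [replicate]

lemma Ci_sub_mem {s n i : ℕ} (C : AddSubgroup (Fin n → ZMod (2^s))) {u v}
    (hu : u ∈ Ci s n (C : Set _) i) (hv : v ∈ Ci s n (C : Set _) i) :
    u - v ∈ Ci s n (C : Set _) i := by
  obtain ⟨c, hc, lam, rfl⟩ := hu
  obtain ⟨c', hc', lam', rfl⟩ := hv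
  refine ⟨c - c', C.sub_mem hc hc', lam - lam', ?_⟩
  rw [rep_sub, sub_smul]
  abel

/-- The counting equivalence. -/
lemma card_Ci {s n i : ℕ} (hn : 0 < n) (hi1 : 1 ≤ i) (his : i ≤ s)
    (C : AddSubgroup (Fin n → ZMod (2^s))) :
    Nat.card (Ci s n (C : Set _) i) = Nat.card (C : Set (Fin n → ZMod (2^s))) * 2^(s-i+1) := by
  classical
  set M := 2^(s-i+1) with hM
  have hM2 : 2 ≤ M := by
    rw [hM]
    calc 2 = 2^1 := (pow_one 2).symm
    _ ≤ 2^(s-i+1) := Nat.pow_le_pow_right (by norm_num) (by omega)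
  have hnM : n ≤ M * n := Nat.le_mul_of_pos_left n (by omega)
  have hMn0 : 0 < M * n := by positivity
  let f : {x // x ∈ (C : Set (Fin n → ZMod (2^s)))} × Fin M → (Ci s n (C : Set _) i) :=
    fun p => ⟨replicate M n (p.1 : Fin n → ZMod (2^s)) + (((p.2 : ℕ) : ZMod (2^s))) • wRep s n i,
      ⟨(p.1 : Fin n → ZMod (2^s)), p.1.2, ((p.2 : ℕ) : ZMod (2^s)), rfl⟩⟩
  have hbij : Function.Bijective f := by
    constructor
    · rintro ⟨⟨c, hc⟩, t⟩ ⟨⟨c', hc'⟩, t'⟩ heq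
      have heq' : replicate M n c + (((t : ℕ) : ZMod (2^s))) • wRep s n i
          = replicate M n c' + (((t' : ℕ) : ZMod (2^s))) • wRep s n i := congrArg Subtype.val heq
      have hcc : c = c' := by
        funext r
        have h1 := congrFun heq' ⟨(r : ℕ), lt_of_lt_of_le r.isLt hnM⟩
        rw [Pi.add_apply, Pi.add_apply, Pi.smul_apply, Pi.smul_apply, smul_eq_mul, smul_eq_mul,
          replicate_val c _ r (Nat.mod_eq_of_lt r.isLt),
          replicate_val c' _ r (Nat.mod_eq_of_lt r.isLt),
          wRep_val _ 0 (Nat.div_eq_of_lt r.isLt)] at h1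
        simpa using h1
      subst hcc
      have hne : (n : ℕ) < M * n := by nlinarith
      have h1 := congrFun heq' ⟨n, hne⟩
      rw [Pi.add_apply, Pi.add_apply, Pi.smul_apply, Pi.smul_apply, smul_eq_mul, smul_eq_mul,
        wRep_val _ 1 (by simp [Nat.div_self hn])] at h1
      have h2 := add_left_cancel h1
      have h3 : (((t : ℕ) * 2^(i-1) : ℕ) : ZMod (2^s)) = (((t' : ℕ) * 2^(i-1) : ℕ) : ZMod (2^s)) := by
        push_cast
        linear_combination h2
      have h4 : (t : ℕ) * 2^(i-1) ≡ (t' : ℕ) * 2^(i-1) [MOD 2^s] :=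
        (ZMod.natCast_eq_natCast_iff _ _ _).mp h3
      have h5 := Nat.ModEq.cancel_right_div_gcd (by positivity) h4
      have hgcd : Nat.gcd (2^s) (2^(i-1)) = 2^(i-1) :=
        Nat.gcd_eq_right (pow_dvd_pow 2 (by omega))
      rw [hgcd, Nat.pow_div (by omega) (by norm_num)] at h5
      have hexp : s - (i-1) = s - i + 1 := by omega
      rw [hexp] at h5
      have h6 : (t : ℕ) % M = (t' : ℕ) % M := h5
      rw [Nat.mod_eq_of_lt t.isLt, Nat.mod_eq_of_lt t'.isLt] at h6
      exact Prod.ext rfl (Fin.ext h6)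
    · rintro ⟨x, c, hc, lam, rfl⟩
      refine ⟨⟨⟨c, hc⟩, ⟨lam.val % M, Nat.mod_lt _ (by omega)⟩⟩, ?_⟩
      apply Subtype.ext
      show replicate M n c + ((((lam.val % M : ℕ) : ZMod (2^s))) • wRep s n i)
          = replicate M n c + lam • wRep s n i
      congr 1
      funext k
      rw [Pi.smul_apply, Pi.smul_apply, smul_eq_mul, smul_eq_mul]
      have hlam : lam = ((M : ℕ) : ZMod (2^s)) * ((lam.val / M : ℕ) : ZMod (2^s))
          + (((lam.val % M : ℕ)) : ZMod (2^s)) := by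
        conv_lhs => rw [← cast_val_eq lam, ← Nat.div_add_mod lam.val M]
        push_cast
        ring
      rw [wRep]
      conv_rhs => rw [hlam]
      rw [add_mul]
      have hz : ((M : ℕ) : ZMod (2^s)) * ((lam.val / M : ℕ) : ZMod (2^s))
          * ((((k : ℕ) / n : ℕ) : ZMod (2^s)) * 2 ^ (i - 1)) = 0 := by
        have := M_alpha_zero hi1 his ((((k : ℕ) / n : ℕ) : ZMod (2^s)) * ((lam.val / M : ℕ) : ZMod (2^s)))
        rw [hM]
        calc ((2^(s-i+1) : ℕ) : ZMod (2^s)) * ((lam.val / M : ℕ) : ZMod (2^s))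
            * ((((k : ℕ) / n : ℕ) : ZMod (2^s)) * 2 ^ (i - 1))
            = ((2^(s-i+1) : ℕ) : ZMod (2^s)) * (((((k : ℕ) / n : ℕ) : ZMod (2^s))
              * ((lam.val / M : ℕ) : ZMod (2^s))) * 2 ^ (i - 1)) := by ring
          _ = 0 := this
      rw [hz, zero_add]
  calc Nat.card (Ci s n (C : Set _) i)
      = Nat.card ({x // x ∈ (C : Set (Fin n → ZMod (2^s)))} × Fin M) :=
        (Nat.card_congr (Equiv.ofBijective f hbij)).symm
    _ = Nat.card (C : Set (Fin n → ZMod (2^s))) * M := by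
        rw [Nat.card_prod]
        congr 1
        simp


end CiHad

open CiHad in
theorem Ci_isHadamard (s n : ℕ) (hs : 2 ≤ s) (C : AddSubgroup (Fin n → ZMod (2^s)))
    (hH : IsHadamardCode (PhiMap s '' (C : Set (Fin n → ZMod (2^s)))) (2 ^ (s - 1) * n)) :
    ∀ i, 1 ≤ i → i ≤ s →
      IsHadamardCode (PhiMap s '' Ci s n (C : Set (Fin n → ZMod (2^s))) i)
        (2 ^ (s - i + 1) * (2 ^ (s - 1) * n)) := by
  intro i hi1 his
  obtain ⟨hlen, hcard, hleast⟩ := hH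
  have h2pow : 2^(s-1) = 2 * 2^(s-2) := by rw [← pow_succ']; congr 1; omega
  have hN2 : (2^(s-1) * n) / 2 = 2^(s-2) * n := by
    rw [h2pow, mul_assoc, Nat.mul_div_cancel_left _ (by norm_num)]
  have hL : (2^(s-i+1) * (2^(s-1) * n)) / 2 = 2^(s-i+1) * (2^(s-2) * n) := by
    rw [h2pow]
    rw [show 2^(s-i+1) * (2 * 2^(s-2) * n) = 2 * (2^(s-i+1) * (2^(s-2) * n)) by ring]
    rw [Nat.mul_div_cancel_left _ (by norm_num)]
  have hM1 : (1:ℕ) ≤ 2^(s-i+1) := Nat.one_le_two_pow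
  -- extract a minimal-weight codeword
  obtain ⟨x, ⟨a, ha, rfl⟩, y, ⟨b, hb, rfl⟩, hxy, hdist⟩ := hleast.1
  have hab : a ≠ b := fun h => hxy (by rw [h])
  have hc0C : a - b ∈ C := C.sub_mem ha hb
  have hc0ne : a - b ≠ 0 := sub_ne_zero.mpr hab
  have hc0w : ∑ k, hwt s ((a - b) k) = 2^(s-2) * n := by
    rw [← hN2, ← hdist, PhiDist hs]
    exact Finset.sum_congr rfl fun k _ => rfl
  have hn : 0 < n := by
    rcases Nat.eq_zero_or_pos n with h | h
    · subst h
      exact absurd (funext fun k => k.elim0) hc0ne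
    · exact h
  -- weight bound for nonzero codewords of C
  have hB : ∀ c, c ∈ C → c ≠ 0 → 2^(s-2) * n ≤ ∑ k, hwt s (c k) := by
    intro c hc hcne
    have hmem : hammingDist (PhiMap s c) (PhiMap s (0 : Fin n → ZMod (2^s)))
        ∈ {d | ∃ x ∈ PhiMap s '' (C : Set (Fin n → ZMod (2^s))),
            ∃ y ∈ PhiMap s '' (C : Set (Fin n → ZMod (2^s))), x ≠ y ∧ hammingDist x y = d} :=
      ⟨_, ⟨c, hc, rfl⟩, _, ⟨0, C.zero_mem, rfl⟩, fun h => hcne (Phi_inj hs h), rfl⟩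
    have hlb := hleast.2 hmem
    rw [PhiDist hs, hN2] at hlb
    simpa using hlb
  refine ⟨?_, ?_, ?_, ?_⟩
  · -- length
    simp only [Fintype.card_prod, Fintype.card_fun, Fintype.card_fin, ZMod.card]
    ring
  · -- cardinality
    rw [Nat.card_coe_set_eq, Set.ncard_image_of_injective _ (Phi_inj hs),
      ← Nat.card_coe_set_eq, card_Ci hn hi1 his]
    rw [Nat.card_coe_set_eq, Set.ncard_image_of_injective _ (Phi_inj hs),
      ← Nat.card_coe_set_eq] at hcard
    rw [hcard]
    ring
  · -- the minimum is attained
    have hx0mem : replicate (2^(s-i+1)) n (a - b) ∈ Ci s n (C : Set _) i :=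
      ⟨a - b, hc0C, 0, by rw [zero_smul, add_zero]⟩
    have hx0ne : replicate (2^(s-i+1)) n (a - b) ≠ 0 := by
      obtain ⟨r, hr⟩ := Function.ne_iff.mp hc0ne
      intro h
      apply hr
      have h1 := congrFun h ⟨(r : ℕ), lt_of_lt_of_le r.isLt (Nat.le_mul_of_pos_left n (by omega))⟩
      rw [replicate_val _ _ r (Nat.mod_eq_of_lt r.isLt)] at h1
      simpa using h1
    refine ⟨PhiMap s (replicate (2^(s-i+1)) n (a - b)), ⟨_, hx0mem, rfl⟩,
      PhiMap s 0, ⟨0, Ci_zero_mem C, rfl⟩, fun h => hx0ne (Phi_inj hs h), ?_⟩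
    rw [PhiDist hs, hL]
    have he : replicate (2^(s-i+1)) n (a - b)
        = replicate (2^(s-i+1)) n (a - b) + (0 : ZMod (2^s)) • wRep s n i := by
      rw [zero_smul, add_zero]
    calc ∑ k, hwt s (replicate (2^(s-i+1)) n (a - b) k - (0 : Fin (2^(s-i+1)*n) → ZMod (2^s)) k)
        = ∑ k, hwt s ((replicate (2^(s-i+1)) n (a - b)
            + (0 : ZMod (2^s)) • wRep s n i) k) := by
          apply Finset.sum_congr rfl
          intro k _
          rw [← he]
          simp
      _ = ∑ j : Fin (2^(s-i+1)), ∑ r : Fin n,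
            hwt s ((a - b) r + (j:ℕ) * ((0 : ZMod (2^s)) * 2^(i-1))) := sum_hwt_elem hn _ _
      _ = ∑ j : Fin (2^(s-i+1)), ∑ r : Fin n, hwt s ((a - b) r) := by
          apply Finset.sum_congr rfl
          intro j _
          apply Finset.sum_congr rfl
          intro r _
          rw [zero_mul, mul_zero, add_zero]
      _ = 2^(s-i+1) * (2^(s-2) * n) := by
          rw [Finset.sum_congr rfl (fun j _ => hc0w), Finset.sum_const, Finset.card_univ,
            Fintype.card_fin, smul_eq_mul]
  · -- lower bound
    rintro d ⟨x, ⟨u, hu, rfl⟩, y, ⟨v, hv, rfl⟩, hxy, rfl⟩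
    have huv : u ≠ v := fun h => hxy (by rw [h])
    have hzmem := Ci_sub_mem C hu hv
    have hzne : u - v ≠ 0 := sub_ne_zero.mpr huv
    rw [PhiDist hs, hL]
    obtain ⟨c, hc, lam, hrep⟩ := hzmem
    have hsum : ∑ k, hwt s (u k - v k)
        = ∑ j : Fin (2^(s-i+1)), ∑ r : Fin n, hwt s (c r + (j:ℕ) * (lam * 2^(i-1))) := by
      calc ∑ k, hwt s (u k - v k)
          = ∑ k, hwt s ((replicate (2^(s-i+1)) n c + lam • wRep s n i) k) := by
            apply Finset.sum_congr rfl
            intro k _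
            rw [← hrep]
            rfl
        _ = _ := sum_hwt_elem hn c lam
    rw [hsum]
    by_cases hα : lam * 2^(i-1) = 0
    · have hcne : c ≠ 0 := by
        intro h
        apply hzne
        rw [hrep, h, rep_zero]
        funext k
        rw [Pi.add_apply, Pi.smul_apply, smul_eq_mul, wRep]
        rw [show lam * ((((k : ℕ) / n : ℕ) : ZMod (2^s)) * 2^(i-1))
            = (((k : ℕ) / n : ℕ) : ZMod (2^s)) * (lam * 2^(i-1)) by ring, hα]
        simp
      have hinner : ∀ j : Fin (2^(s-i+1)),
          2^(s-2) * n ≤ ∑ r : Fin n, hwt s (c r + (j:ℕ) * (lam * 2^(i-1))) := by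
        intro j
        have : ∑ r : Fin n, hwt s (c r + (j:ℕ) * (lam * 2^(i-1)))
            = ∑ r : Fin n, hwt s (c r) := by
          apply Finset.sum_congr rfl
          intro r _
          rw [hα, mul_zero, add_zero]
        rw [this]
        exact hB c hc hcne
      calc 2^(s-i+1) * (2^(s-2) * n)
          = ∑ _j : Fin (2^(s-i+1)), 2^(s-2) * n := by
            rw [Finset.sum_const, Finset.card_univ, Fintype.card_fin, smul_eq_mul]
        _ ≤ _ := Finset.sum_le_sum fun j _ => hinner j
    · rw [Finset.sum_comm]
      calc 2^(s-i+1) * (2^(s-2) * n)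
          = ∑ _r : Fin n, 2^(s-i+1) * 2^(s-2) := by
            rw [Finset.sum_const, Finset.card_univ, Fintype.card_fin, smul_eq_mul]
            ring
        _ ≤ _ := Finset.sum_le_sum fun r _ => key_sum hs hi1 his lam (c r) hα
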